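/- Let R be a commutative ring graded by ℕ^r and let M be an ℕ^r-graded R-module. Then every associated prime of M is a homogeneous ideal of R. -/

import Mathlib

set_option maxHeartbeats 1000000
set_option synthInstance.maxHeartbeats 400000


/-- Auxiliary general form: over any index type with a linear order that is
(strictly) compatible with addition, every associated prime of a graded module
over a graded ring is generated by homogeneous elements. -/
theorem aux_homog (ι : Type) [AddCommMonoid ι] [LinearOrder ι]
    (hmono : ∀ a b c d : ι, a ≤ b → c < d → a + c < b + d)
    (R : Type) [CommRing R] (ℛ : ι → AddSubgroup R)
    (hRsum : ∀ a : R, ∃ (s : Finset ι) (f : ι → R),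
      (∀ u ∈ s, f u ∈ ℛ u) ∧ a = ∑ u ∈ s, f u)
    (M : Type) [AddCommGroup M] [Module R M] (ℳ : ι → AddSubgroup M)
    (hMsum : ∀ m : M, ∃ (t : Finset ι) (g : ι → M),
      (∀ v ∈ t, g v ∈ ℳ v) ∧ m = ∑ v ∈ t, g v)
    (hMind : ∀ (t : Finset ι) (g : ι → M), (∀ v ∈ t, g v ∈ ℳ v) →
      ∑ v ∈ t, g v = 0 → ∀ v ∈ t, g v = 0)
    (hMsmul : ∀ (u v : ι) (a : R) (m : M), a ∈ ℛ u → m ∈ ℳ v → a • m ∈ ℳ (u + v))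
    (p : Ideal R) (hp : p.IsPrime)
    (hass : ∃ m : M, ∀ s : R, s ∈ p ↔ s • m = 0) :
    ∃ T : Set R, (∀ t ∈ T, ∃ u : ι, t ∈ ℛ u) ∧ p = Ideal.span T := by
  classical
  obtain ⟨m₀, hm₀⟩ := hass
  have hcancel : ∀ x y z : ι, x + y = x + z → y = z := by
    intro x y z h
    rcases lt_trichotomy y z with h' | h' | h'
    · exact absurd h (ne_of_lt (hmono x x y z le_rfl h'))
    · exact h'
    · exact absurd h.symm (ne_of_lt (hmono x x z y le_rfl h'))
  -- Key lemma: if `a = ∑_{u ∈ s} f u` kills `m` and `m` is a sum of at most `n`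
  -- homogeneous pieces, then the top homogeneous component of `a` raised to `n` kills `m`.
  have keyC : ∀ (n : ℕ) (s : Finset ι) (f : ι → R) (hs : s.Nonempty),
      (∀ u ∈ s, f u ∈ ℛ u) →
      ∀ (m : M) (t : Finset ι) (g : ι → M), t.card ≤ n → (∀ v ∈ t, g v ∈ ℳ v) →
      m = ∑ v ∈ t, g v → (∑ u ∈ s, f u) • m = 0 →
      (f (s.max' hs)) ^ n • m = 0 := by
    intro n
    induction n with
    | zero =>
      intro s f hs hf m t g hcard hg hm _
      have ht : t = ∅ := Finset.card_eq_zero.mp (Nat.le_zero.mp hcard)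
      subst ht
      simp only [Finset.sum_empty] at hm
      simp [hm]
    | succ n ih =>
      intro s f hs hf m t g hcard hg hm h0
      rcases t.eq_empty_or_nonempty with ht | ht
      · subst ht
        simp only [Finset.sum_empty] at hm
        simp [hm]
      · set u₀ := s.max' hs with hu₀
        set v₀ := t.max' ht with hv₀
        set b := f u₀ with hb
        have hbmem : b ∈ ℛ u₀ := hf u₀ (s.max'_mem hs)
        -- Step 1 : the top component of `a` kills the top component of `m`.
        have hbg : b • g v₀ = 0 := by
          have hmaps : ∀ q ∈ s ×ˢ t, q.1 + q.2 ∈ (s ×ˢ t).image (fun q : ι × ι => q.1 + q.2) :=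
            fun q hq => Finset.mem_image_of_mem _ hq
          have hfib := Finset.sum_fiberwise_of_maps_to hmaps (fun q : ι × ι => f q.1 • g q.2)
          have htot : ∑ q ∈ s ×ˢ t, f q.1 • g q.2 = 0 := by
            rw [Finset.sum_product]
            have : (∑ u ∈ s, f u) • m = ∑ u ∈ s, ∑ v ∈ t, f u • g v := by
              rw [hm, Finset.sum_smul]
              exact Finset.sum_congr rfl fun u _ => Finset.smul_sum
            rw [← this, h0]
          have hzero := hMind ((s ×ˢ t).image (fun q : ι × ι => q.1 + q.2))
            (fun w => ∑ q ∈ (s ×ˢ t).filter (fun q : ι × ι => q.1 + q.2 = w), f q.1 • g q.2)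
            (by
              intro w _
              apply AddSubgroup.sum_mem
              intro q hq
              rw [Finset.mem_filter] at hq
              have hmem := hMsmul q.1 q.2 (f q.1) (g q.2)
                (hf q.1 (Finset.mem_product.mp hq.1).1) (hg q.2 (Finset.mem_product.mp hq.1).2)
              rwa [hq.2] at hmem)
            (by rw [hfib, htot])
          have hw₀ : u₀ + v₀ ∈ (s ×ˢ t).image (fun q : ι × ι => q.1 + q.2) :=
            Finset.mem_image.mpr ⟨(u₀, v₀),
              Finset.mem_product.mpr ⟨s.max'_mem hs, t.max'_mem ht⟩, rfl⟩
          have hone := hzero _ hw₀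
          have hfilter : (s ×ˢ t).filter (fun q : ι × ι => q.1 + q.2 = u₀ + v₀)
              = {(u₀, v₀)} := by
            apply Finset.eq_singleton_iff_unique_mem.mpr
            constructor
            · exact Finset.mem_filter.mpr
                ⟨Finset.mem_product.mpr ⟨s.max'_mem hs, t.max'_mem ht⟩, rfl⟩
            · rintro ⟨x, y⟩ hxy
              rw [Finset.mem_filter, Finset.mem_product] at hxy
              obtain ⟨⟨hx, hy⟩, hxyeq⟩ := hxy
              have hx' : x ≤ u₀ := s.le_max' x hx
              have hy' : y ≤ v₀ := t.le_max' y hy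
              have hxu : x = u₀ := by
                rcases hx'.lt_or_eq with h' | h'
                · exfalso
                  have hlt := hmono y v₀ x u₀ hy' h'
                  rw [add_comm y x, add_comm v₀ u₀] at hlt
                  exact (ne_of_lt hlt) hxyeq
                · exact h'
              have hyv : y = v₀ := hcancel u₀ y v₀ (hxu ▸ hxyeq)
              rw [hxu, hyv]
          rw [hfilter, Finset.sum_singleton] at hone
          exact hone
        -- Step 2 : multiply `m` by `b`, get a shorter homogeneous decomposition.
        have hg'mem : ∀ w ∈ (t.erase v₀).image (fun v => u₀ + v),
            (∑ v ∈ (t.erase v₀).filter (fun v => u₀ + v = w), b • g v) ∈ ℳ w := by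
          intro w _
          apply AddSubgroup.sum_mem
          intro v hv
          rw [Finset.mem_filter] at hv
          have hmem := hMsmul u₀ v b (g v) hbmem (hg v (Finset.mem_of_mem_erase hv.1))
          rwa [hv.2] at hmem
        have hsum' : ∑ w ∈ (t.erase v₀).image (fun v => u₀ + v),
            ∑ v ∈ (t.erase v₀).filter (fun v => u₀ + v = w), b • g v = b • m := by
          rw [Finset.sum_fiberwise_of_maps_to (fun v hv => Finset.mem_image_of_mem _ hv)
            (fun v => b • g v)]
          rw [← Finset.smul_sum, hm, ← Finset.add_sum_erase t g (t.max'_mem ht),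
            smul_add, hbg, zero_add]
        have hcard' : ((t.erase v₀).image (fun v => u₀ + v)).card ≤ n := by
          have h1 : ((t.erase v₀).image (fun v => u₀ + v)).card ≤ (t.erase v₀).card :=
            Finset.card_image_le
          have h2 : (t.erase v₀).card = t.card - 1 := Finset.card_erase_of_mem (t.max'_mem ht)
          have h3 : t.card ≠ 0 := by
            intro h
            exact Finset.nonempty_iff_ne_empty.mp ht (Finset.card_eq_zero.mp h)
          omega
        have h0' : (∑ u ∈ s, f u) • (b • m) = 0 := by
          rw [smul_smul, mul_comm, ← smul_smul, h0, smul_zero]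
        have hrec := ih s f hs hf (b • m) ((t.erase v₀).image (fun v => u₀ + v))
          (fun w => ∑ v ∈ (t.erase v₀).filter (fun v => u₀ + v = w), b • g v)
          hcard' hg'mem hsum'.symm h0'
        rw [pow_succ, mul_smul]
        exact hrec
  -- Every homogeneous piece of an element of `p` lies in `p`.
  have keyR : ∀ (n : ℕ) (s : Finset ι) (f : ι → R), s.card ≤ n →
      (∀ u ∈ s, f u ∈ ℛ u) → (∑ u ∈ s, f u) ∈ p → ∀ u ∈ s, f u ∈ p := by
    intro n
    induction n with
    | zero =>
      intro s f hcard _ _ u hu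
      rw [Finset.card_eq_zero.mp (Nat.le_zero.mp hcard)] at hu
      exact absurd hu (Finset.notMem_empty u)
    | succ n ih =>
      intro s f hcard hf hsp u hu
      have hs : s.Nonempty := ⟨u, hu⟩
      set u₀ := s.max' hs with hu₀
      have hb : f u₀ ∈ p := by
        obtain ⟨t, g, hg, hmdec⟩ := hMsum m₀
        have h0 : (∑ u ∈ s, f u) • m₀ = 0 := (hm₀ _).1 hsp
        have hpow := keyC t.card s f hs hf m₀ t g le_rfl hg hmdec h0
        exact hp.mem_of_pow_mem _ ((hm₀ _).2 hpow)
      by_cases hcase : u = u₀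
      · rw [hcase]; exact hb
      · have hrest : (∑ v ∈ s.erase u₀, f v) ∈ p := by
          have heq : ∑ v ∈ s.erase u₀, f v = (∑ v ∈ s, f v) - f u₀ := by
            rw [← Finset.add_sum_erase s f (s.max'_mem hs)]; ring
          rw [heq]
          exact Ideal.sub_mem p hsp hb
        have hcard' : (s.erase u₀).card ≤ n := by
          have h2 : (s.erase u₀).card = s.card - 1 := Finset.card_erase_of_mem (s.max'_mem hs)
          have h3 : s.card ≠ 0 := by
            intro h
            exact Finset.nonempty_iff_ne_empty.mp hs (Finset.card_eq_zero.mp h)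
          omega
        exact ih (s.erase u₀) f hcard' (fun v hv => hf v (Finset.mem_of_mem_erase hv)) hrest u
          (Finset.mem_erase.mpr ⟨hcase, hu⟩)
  refine ⟨{x : R | (∃ u : ι, x ∈ ℛ u) ∧ x ∈ p}, fun t ht => ht.1, ?_⟩
  apply le_antisymm
  · intro a ha
    obtain ⟨s, f, hf, hdec⟩ := hRsum a
    rw [hdec]
    apply Ideal.sum_mem
    intro u hu
    apply Ideal.subset_span
    exact ⟨⟨u, hf u hu⟩, keyR s.card s f le_rfl hf (hdec ▸ ha) u hu⟩
  · rw [Ideal.span_le]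
    intro x hx
    exact hx.2

/-!
STATEMENT 7: Let `R` be a commutative ring graded by ℕ^r and `M` an ℕ^r-graded
`R`-module.  Then every associated prime of `M` (i.e. a prime ideal of the form
`Ann_R(m)` for some `m ∈ M`) is a homogeneous ideal of `R`, i.e. it is generated
by homogeneous elements (elements lying in single graded components).
-/

theorem statement7 (r : ℕ) (R : Type) [CommRing R]
    -- the ℕ^r-grading on R
    (ℛ : (Fin r →₀ ℕ) → AddSubgroup R)
    (hR : DirectSum.IsInternal ℛ)
    (hRmul : ∀ (u v : Fin r →₀ ℕ) (a b : R), a ∈ ℛ u → b ∈ ℛ v → a * b ∈ ℛ (u + v))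
    -- the ℕ^r-graded module M
    (M : Type) [AddCommGroup M] [Module R M]
    (ℳ : (Fin r →₀ ℕ) → AddSubgroup M)
    (hM : DirectSum.IsInternal ℳ)
    (hMsmul : ∀ (u v : Fin r →₀ ℕ) (a : R) (m : M), a ∈ ℛ u → m ∈ ℳ v →
      a • m ∈ ℳ (u + v))
    -- p is an associated prime of M
    (p : Ideal R) (hp : p.IsPrime)
    (hass : ∃ m : M, ∀ s : R, s ∈ p ↔ s • m = 0) :
    ∃ T : Set R, (∀ t ∈ T, ∃ u : Fin r →₀ ℕ, t ∈ ℛ u) ∧ p = Ideal.span T := by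
  classical
  -- decomposability for R
  have keyR : ∀ x : DirectSum (Fin r →₀ ℕ) (fun u => ↥(ℛ u)), ∃ (s : Finset (Fin r →₀ ℕ)) (f : (Fin r →₀ ℕ) → R),
      (∀ u ∈ s, f u ∈ ℛ u) ∧ (DirectSum.coeAddMonoidHom ℛ) x = ∑ u ∈ s, f u := by
    intro x
    induction x using DirectSum.induction_on with
    | zero => exact ⟨∅, 0, by simp, by simp⟩
    | of i y =>
      refine ⟨{i}, fun _ => (y : R), ?_, ?_⟩
      · intro u hu
        rw [Finset.mem_singleton] at hu
        subst hu
        exact y.2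
      · rw [Finset.sum_singleton, DirectSum.coeAddMonoidHom_of]
    | add x y hx hy =>
      obtain ⟨s₁, f₁, h₁, e₁⟩ := hx
      obtain ⟨s₂, f₂, h₂, e₂⟩ := hy
      refine ⟨s₁ ∪ s₂,
        fun u => (if u ∈ s₁ then f₁ u else 0) + (if u ∈ s₂ then f₂ u else 0), ?_, ?_⟩
      · intro u _
        apply add_mem
        · split_ifs with h
          · exact h₁ u h
          · exact zero_mem _
        · split_ifs with h
          · exact h₂ u h
          · exact zero_mem _
      · rw [map_add, e₁, e₂, Finset.sum_add_distrib, Finset.sum_ite_mem, Finset.sum_ite_mem,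
          Finset.union_inter_cancel_left, Finset.union_inter_cancel_right]
  have hRsum : ∀ a : R, ∃ (s : Finset (Fin r →₀ ℕ)) (f : (Fin r →₀ ℕ) → R),
      (∀ u ∈ s, f u ∈ ℛ u) ∧ a = ∑ u ∈ s, f u := by
    intro a
    obtain ⟨x, hx⟩ := hR.surjective a
    obtain ⟨s, f, hf, he⟩ := keyR x
    exact ⟨s, f, hf, by rw [← hx, he]⟩
  -- decomposability for M
  have keyM : ∀ x : DirectSum (Fin r →₀ ℕ) (fun u => ↥(ℳ u)), ∃ (t : Finset (Fin r →₀ ℕ)) (g : (Fin r →₀ ℕ) → M),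
      (∀ v ∈ t, g v ∈ ℳ v) ∧ (DirectSum.coeAddMonoidHom ℳ) x = ∑ v ∈ t, g v := by
    intro x
    induction x using DirectSum.induction_on with
    | zero => exact ⟨∅, 0, by simp, by simp⟩
    | of i y =>
      refine ⟨{i}, fun _ => (y : M), ?_, ?_⟩
      · intro u hu
        rw [Finset.mem_singleton] at hu
        subst hu
        exact y.2
      · rw [Finset.sum_singleton, DirectSum.coeAddMonoidHom_of]
    | add x y hx hy =>
      obtain ⟨s₁, f₁, h₁, e₁⟩ := hx
      obtain ⟨s₂, f₂, h₂, e₂⟩ := hy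
      refine ⟨s₁ ∪ s₂,
        fun u => (if u ∈ s₁ then f₁ u else 0) + (if u ∈ s₂ then f₂ u else 0), ?_, ?_⟩
      · intro u _
        apply add_mem
        · split_ifs with h
          · exact h₁ u h
          · exact zero_mem _
        · split_ifs with h
          · exact h₂ u h
          · exact zero_mem _
      · rw [map_add, e₁, e₂, Finset.sum_add_distrib, Finset.sum_ite_mem, Finset.sum_ite_mem,
          Finset.union_inter_cancel_left, Finset.union_inter_cancel_right]
  have hMsum : ∀ m : M, ∃ (t : Finset (Fin r →₀ ℕ)) (g : (Fin r →₀ ℕ) → M),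
      (∀ v ∈ t, g v ∈ ℳ v) ∧ m = ∑ v ∈ t, g v := by
    intro m
    obtain ⟨x, hx⟩ := hM.surjective m
    obtain ⟨t, g, hg, he⟩ := keyM x
    exact ⟨t, g, hg, by rw [← hx, he]⟩
  -- independence for M
  have hMind : ∀ (t : Finset (Fin r →₀ ℕ)) (g : (Fin r →₀ ℕ) → M),
      (∀ v ∈ t, g v ∈ ℳ v) → ∑ v ∈ t, g v = 0 → ∀ v ∈ t, g v = 0 := by
    intro t g hg hz v hv
    set x : DirectSum (Fin r →₀ ℕ) (fun u => ↥(ℳ u)) :=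
      ∑ w ∈ t.attach, DirectSum.of (fun u => ℳ u) w.1 ⟨g w.1, hg w.1 w.2⟩ with hx
    have hcoe : (DirectSum.coeAddMonoidHom ℳ) x = 0 := by
      rw [hx, map_sum]
      simp only [DirectSum.coeAddMonoidHom_of]
      rw [Finset.sum_attach t (fun w => g w)]
      exact hz
    have hx0 : x = 0 := hM.injective (by rw [hcoe, map_zero])
    have hxv : x v = ⟨g v, hg v hv⟩ := by
      rw [hx, DFinsupp.finset_sum_apply]
      rw [Finset.sum_eq_single_of_mem (⟨v, hv⟩ : {y // y ∈ t}) (Finset.mem_attach t _)]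
      · exact DirectSum.of_eq_same v _
      · intro w _ hwv
        exact DirectSum.of_eq_of_ne _ _ _ (fun h => hwv (Subtype.ext h.symm))
    have hzero : (⟨g v, hg v hv⟩ : ℳ v) = 0 := by
      rw [← hxv, hx0]
      rfl
    exact congrArg Subtype.val hzero
  -- strict monotonicity of addition for the lexicographic order on ℕ^r
  have hmono : ∀ a b c d : Lex (Fin r →₀ ℕ), a ≤ b → c < d → a + c < b + d := by
    intro a b c d hab hcd
    calc a + c < a + d := add_lt_add_right hcd a
      _ ≤ b + d := add_le_add_left hab d
  exact aux_homog (Lex (Fin r →₀ ℕ)) hmono R ℛ hRsum M ℳ hMsum hMind hMsmul p hp hass
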